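/- For any feature i, coalition set S, model f and sample x, the conditional Shapley contribution decomposes as φ_{i,S}(f,x) = φ_{i,S,int}(f,x) + φ_{i,S,dep}(f,x), where φ_{i,S}(f,x) = E[f(X) | X_{S∪{i}} = x_{S∪{i}}] − E[f(X) | X_S = x_S], φ_{i,S,int}(f,x) = E[f([x_S, x_i, X_{\bar S \setminus i}]) | X_S = x_S] − E[f([x_S, X_{\bar S}]) | X_S = x_S], and φ_{i,S,dep}(f,x) = E[f([x_S, x_i, X_{\bar S \setminus i}]) | X_{S∪{i}} = x_{S∪{i}}] − E[f([x_S, x_i, X_{\bar S \setminus i}]) | X_S = x_S]. -/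
import Mathlib


/-- `upd x S z` is the vector `[x_S, z_{S̄}]`: coordinates in `S` fixed to the sample `x`,
the remaining ones given by `z`. -/
noncomputable def upd {M : ℕ} (x : Fin M → ℝ) (S : Finset (Fin M)) (z : Fin M → ℝ) :
    Fin M → ℝ := fun j => if j ∈ S then x j else z j

/-- Decomposition of the conditional Shapley contribution:
`φ_{i,S}(f,x) = φ_{i,S,int}(f,x) + φ_{i,S,dep}(f,x)`.
Here `CE S g` denotes the conditional expectation `E[g(X) | X_S = x_S]`, and `hsubst`
expresses that conditionally on `X_S = x_S` one may substitute `x_S` for the known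
coordinates inside the integrand. -/
theorem shap_contribution_decomposition {M : ℕ} (i : Fin M) (S : Finset (Fin M))
    (hiS : i ∉ S) (f : (Fin M → ℝ) → ℝ) (x : Fin M → ℝ)
    (CE : Finset (Fin M) → ((Fin M → ℝ) → ℝ) → ℝ)
    (hsubst : ∀ (T : Finset (Fin M)) (g : (Fin M → ℝ) → ℝ),
      CE T (fun z => g (upd x T z)) = CE T g) :
    CE (insert i S) f - CE S f
      = (CE S (fun z => f (upd x (insert i S) z)) - CE S (fun z => f (upd x S z)))
        + (CE (insert i S) (fun z => f (upd x (insert i S) z))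
            - CE S (fun z => f (upd x (insert i S) z))) := by
  rw [hsubst (insert i S) f, hsubst S f]
  ring
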